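/- (Hadwiger) Let K be a convex body in ℝ^n and let Λ be a full-rank lattice in ℝ^n such that K + Λ = ℝ^n. Then the star number satisfies α(K,Λ) ≤ (vol(2K + (−K))/vol(K)) · (vol(K)/det(Λ)); equivalently, α(K,Λ) · det(Λ) ≤ vol(2K + (−K)), where 2K + (−K) = {2x − y : x, y ∈ K}. -/

import Mathlib

open Pointwise MeasureTheory

private lemma hadwiger_vol_fd (n : ℕ) (b : Module.Basis (Fin n) ℝ (EuclideanSpace ℝ (Fin n))) :
    volume (ZSpan.fundamentalDomain b) = ENNReal.ofReal |(Matrix.of fun i j => b i j).det| := by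
  classical
  set L := (EuclideanSpace.equiv (Fin n) ℝ).toLinearEquiv with hL
  have himg : L '' (ZSpan.fundamentalDomain b) = ZSpan.fundamentalDomain (b.map L) :=
    ZSpan.map_fundamentalDomain b L
  have hmp := EuclideanSpace.volume_preserving_symm_measurableEquiv_toLp (Fin n)
  have h1 : volume (ZSpan.fundamentalDomain b)
      = volume (ZSpan.fundamentalDomain (b.map L)) := by
    rw [← himg]
    have : L '' (ZSpan.fundamentalDomain b)
        = ((MeasurableEquiv.toLp 2 (Fin n → ℝ)).symm) '' (ZSpan.fundamentalDomain b) := by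
      rw [MeasurableEquiv.coe_toLp_symm]; rfl
    rw [this, MeasurableEquiv.image_eq_preimage_symm]
    exact ((hmp.symm _).measure_preimage
      (ZSpan.fundamentalDomain_measurableSet b).nullMeasurableSet).symm
  rw [h1, ZSpan.volume_fundamentalDomain]
  congr 1

private lemma hadwiger_star_finite (n : ℕ) (K : Set (EuclideanSpace ℝ (Fin n)))
    (hKcpt : IsCompact K) (b : Module.Basis (Fin n) ℝ (EuclideanSpace ℝ (Fin n))) :
    {u : EuclideanSpace ℝ (Fin n) | u ∈ Submodule.span ℤ (Set.range b) ∧ u ≠ 0 ∧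
        (K ∩ (K + {u})).Nonempty}.Finite := by
  classical
  set Λ := Submodule.span ℤ (Set.range b) with hΛ
  have hclosed : IsClosed ((Λ : Set (EuclideanSpace ℝ (Fin n)))) :=
    AddSubgroup.isClosed_of_discrete (H := Λ.toAddSubgroup)
  have hcpt : IsCompact ((Λ : Set (EuclideanSpace ℝ (Fin n))) ∩ (K + -K)) :=
    (hKcpt.add hKcpt.neg).inter_left hclosed
  have hdisc : DiscreteTopology
      (((Λ : Set (EuclideanSpace ℝ (Fin n))) ∩ (K + -K) : Set (EuclideanSpace ℝ (Fin n)))) := by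
    have h1 : DiscreteTopology (Λ : Set (EuclideanSpace ℝ (Fin n))) :=
      inferInstanceAs (DiscreteTopology Λ)
    exact h1.of_subset Set.inter_subset_left
  have hTfin : ((Λ : Set (EuclideanSpace ℝ (Fin n))) ∩ (K + -K)).Finite := hcpt.finite ⟨hdisc⟩
  refine hTfin.subset ?_
  rintro u ⟨hu, -, z, hzK, hz2⟩
  obtain ⟨y, hy, rfl⟩ : ∃ y ∈ K, y + u = z := by
    obtain ⟨y, hy, w, hw, hyw⟩ := Set.mem_add.1 hz2
    exact ⟨y, hy, by rw [Set.mem_singleton_iff] at hw; rw [← hw]; exact hyw⟩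
  exact ⟨hu, Set.mem_add.2 ⟨y + u, hzK, -y, Set.neg_mem_neg.2 hy, by abel⟩⟩

private lemma hadwiger_fd_translates_disjoint (n : ℕ)
    (b : Module.Basis (Fin n) ℝ (EuclideanSpace ℝ (Fin n))) {v w : EuclideanSpace ℝ (Fin n)}
    (hv : v ∈ Submodule.span ℤ (Set.range b)) (hw : w ∈ Submodule.span ℤ (Set.range b))
    (hvw : v ≠ w) :
    Disjoint (v +ᵥ ZSpan.fundamentalDomain b) (w +ᵥ ZSpan.fundamentalDomain b) := by
  rw [Set.disjoint_left]
  rintro x hxv hxw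
  obtain ⟨u0, -, huniq⟩ := ZSpan.exist_unique_vadd_mem_fundamentalDomain b x
  have h1 : (⟨-v, neg_mem hv⟩ : Submodule.span ℤ (Set.range b)) = u0 := by
    refine huniq _ ?_
    rw [Set.mem_vadd_set_iff_neg_vadd_mem] at hxv
    exact hxv
  have h2 : (⟨-w, neg_mem hw⟩ : Submodule.span ℤ (Set.range b)) = u0 := by
    refine huniq _ ?_
    rw [Set.mem_vadd_set_iff_neg_vadd_mem] at hxw
    exact hxw
  exact hvw (neg_injective (Subtype.mk_eq_mk.1 (h1.trans h2.symm)))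

/-- Existence of a measurable selection set `D ⊆ K` whose lattice translates are pairwise
disjoint and whose volume equals that of the fundamental domain of the lattice. -/
private lemma hadwiger_exists_selection (n : ℕ) (K : Set (EuclideanSpace ℝ (Fin n)))
    (hKcl : IsClosed K) (b : Module.Basis (Fin n) ℝ (EuclideanSpace ℝ (Fin n)))
    (hcov : K + (↑(Submodule.span ℤ (Set.range b)) : Set (EuclideanSpace ℝ (Fin n)))
      = Set.univ) :
    ∃ D : Set (EuclideanSpace ℝ (Fin n)), MeasurableSet D ∧ D ⊆ K ∧
      volume D = volume (ZSpan.fundamentalDomain b) ∧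
      (∀ v w : EuclideanSpace ℝ (Fin n), v ∈ Submodule.span ℤ (Set.range b) →
        w ∈ Submodule.span ℤ (Set.range b) → v ≠ w → Disjoint (v +ᵥ D) (w +ᵥ D)) := by
  classical
  set Λ := Submodule.span ℤ (Set.range b) with hΛ
  set F := ZSpan.fundamentalDomain b with hF
  obtain ⟨e, he⟩ := exists_surjective_nat Λ
  set B : ℕ → Set (EuclideanSpace ℝ (Fin n)) :=
    fun k => F ∩ ((· - (e k : EuclideanSpace ℝ (Fin n))) ⁻¹' K) with hB
  have hBmeas : ∀ k, MeasurableSet (B k) := fun k =>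
    (ZSpan.fundamentalDomain_measurableSet b).inter
      (hKcl.measurableSet.preimage (measurable_id.sub measurable_const))
  have hBunion : ⋃ k, B k = F := by
    refine subset_antisymm (Set.iUnion_subset fun k => Set.inter_subset_left) fun x hx => ?_
    have hxmem : x ∈ K + (Λ : Set (EuclideanSpace ℝ (Fin n))) := by rw [hcov]; trivial
    obtain ⟨a, ha, c, hc, hac⟩ := Set.mem_add.1 hxmem
    obtain ⟨k, hk⟩ := he ⟨c, hc⟩
    refine Set.mem_iUnion.2 ⟨k, hx, ?_⟩
    have h1 : (e k : EuclideanSpace ℝ (Fin n)) = c := by rw [hk]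
    simp only [Set.mem_preimage, h1]
    have h2 : x - c = a := by rw [← hac]; abel
    rw [h2]; exact ha
  set C : ℕ → Set (EuclideanSpace ℝ (Fin n)) := disjointed B with hC
  have hCsub : ∀ k, C k ⊆ B k := fun k => disjointed_subset B k
  have hCdisj : Pairwise (Function.onFun Disjoint C) := disjoint_disjointed B
  have hCmeas : ∀ k, MeasurableSet (C k) := MeasurableSet.disjointed hBmeas
  have hCunion : ⋃ k, C k = F := by rw [hC, iUnion_disjointed, hBunion]
  set D : Set (EuclideanSpace ℝ (Fin n)) :=
    ⋃ k, (-(e k : EuclideanSpace ℝ (Fin n))) +ᵥ C k with hD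
  have hCF : ∀ k, C k ⊆ F := fun k => (hCsub k).trans Set.inter_subset_left
  have key : ∀ (k j : ℕ) (p q : EuclideanSpace ℝ (Fin n)), p ∈ Λ → q ∈ Λ →
      ∀ x, x ∈ p +ᵥ ((-(e k : EuclideanSpace ℝ (Fin n))) +ᵥ C k) →
      x ∈ q +ᵥ ((-(e j : EuclideanSpace ℝ (Fin n))) +ᵥ C j) → k = j ∧ p = q := by
    intro k j p q hp hq x hxk hxj
    rw [Set.mem_vadd_set_iff_neg_vadd_mem, Set.mem_vadd_set_iff_neg_vadd_mem] at hxk hxj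
    have hk' : ((e k : EuclideanSpace ℝ (Fin n)) - p) + x ∈ C k := by
      have h := hxk
      have heq : (-(-(e k : EuclideanSpace ℝ (Fin n)))) +ᵥ ((-p) +ᵥ x)
          = ((e k : EuclideanSpace ℝ (Fin n)) - p) + x := by
        simp [vadd_eq_add, sub_eq_add_neg]; abel
      rwa [heq] at h
    have hj' : ((e j : EuclideanSpace ℝ (Fin n)) - q) + x ∈ C j := by
      have h := hxj
      have heq : (-(-(e j : EuclideanSpace ℝ (Fin n)))) +ᵥ ((-q) +ᵥ x)
          = ((e j : EuclideanSpace ℝ (Fin n)) - q) + x := by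
        simp [vadd_eq_add, sub_eq_add_neg]; abel
      rwa [heq] at h
    have hpq : (e k : EuclideanSpace ℝ (Fin n)) - p = (e j : EuclideanSpace ℝ (Fin n)) - q := by
      by_contra hne
      have hne' : p - (e k : EuclideanSpace ℝ (Fin n))
          ≠ q - (e j : EuclideanSpace ℝ (Fin n)) := fun h => hne (by
        have := congrArg Neg.neg h; simpa [neg_sub] using this)
      have hdisj := hadwiger_fd_translates_disjoint n b
        (sub_mem hp (e k).2) (sub_mem hq (e j).2) hne'
      rw [Set.disjoint_left] at hdisj
      have m1 : x ∈ (p - (e k : EuclideanSpace ℝ (Fin n))) +ᵥ F := by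
        rw [Set.mem_vadd_set_iff_neg_vadd_mem, neg_sub]
        exact hCF k hk'
      have m2 : x ∈ (q - (e j : EuclideanSpace ℝ (Fin n))) +ᵥ F := by
        rw [Set.mem_vadd_set_iff_neg_vadd_mem, neg_sub]
        exact hCF j hj'
      exact hdisj m1 m2
    have hkj : k = j := by
      by_contra hkj
      have hd := hCdisj hkj
      rw [Function.onFun, Set.disjoint_left] at hd
      refine hd hk' ?_
      rw [hpq]; exact hj'
    refine ⟨hkj, ?_⟩
    subst hkj
    exact sub_right_injective hpq
  refine ⟨D, ?_, ?_, ?_, ?_⟩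
  · exact MeasurableSet.iUnion fun k => (hCmeas k).const_vadd _
  · refine Set.iUnion_subset fun k x hx => ?_
    rw [Set.mem_vadd_set_iff_neg_vadd_mem] at hx
    have hB' := hCsub k hx
    have := hB'.2
    simpa [vadd_eq_add] using this
  · have hdisjD : Pairwise (Function.onFun Disjoint fun k => (-(e k : EuclideanSpace ℝ (Fin n))) +ᵥ C k) := by
      intro k j hkj
      rw [Function.onFun, Set.disjoint_left]
      intro x hxk hxj
      have h0 : x ∈ (0 : EuclideanSpace ℝ (Fin n)) +ᵥ
          ((-(e k : EuclideanSpace ℝ (Fin n))) +ᵥ C k) := by simpa using hxk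
      have h0' : x ∈ (0 : EuclideanSpace ℝ (Fin n)) +ᵥ
          ((-(e j : EuclideanSpace ℝ (Fin n))) +ᵥ C j) := by simpa using hxj
      exact hkj (key k j 0 0 (zero_mem Λ) (zero_mem Λ) x h0 h0').1
    rw [hD, measure_iUnion hdisjD fun k => (hCmeas k).const_vadd _]
    have hv : ∀ k, volume ((-(e k : EuclideanSpace ℝ (Fin n))) +ᵥ C k) = volume (C k) :=
      fun k => measure_vadd volume _ _
    simp_rw [hv]
    rw [← measure_iUnion hCdisj hCmeas, hCunion]
  · intro v w hv hw hvw
    rw [Set.disjoint_left]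
    intro x hxv hxw
    rw [Set.mem_vadd_set_iff_neg_vadd_mem, hD] at hxv hxw
    obtain ⟨k, hk⟩ := Set.mem_iUnion.1 hxv
    obtain ⟨j, hj⟩ := Set.mem_iUnion.1 hxw
    have m1 : x ∈ v +ᵥ ((-(e k : EuclideanSpace ℝ (Fin n))) +ᵥ C k) :=
      Set.mem_vadd_set_iff_neg_vadd_mem.2 hk
    have m2 : x ∈ w +ᵥ ((-(e j : EuclideanSpace ℝ (Fin n))) +ᵥ C j) :=
      Set.mem_vadd_set_iff_neg_vadd_mem.2 hj
    exact hvw (key k j v w hv hw x m1 m2).2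

/-- (Hadwiger) For a lattice covering `K + Λ = ℝ^n` by a convex body `K`, the star number
satisfies `α(K,Λ) · det(Λ) ≤ vol(2K + (−K))`. -/
theorem hadwiger_star_number_bound (n : ℕ)
    (K : Set (EuclideanSpace ℝ (Fin n)))
    (hKcpt : IsCompact K) (hKconv : Convex ℝ K) (hKint : (interior K).Nonempty)
    (b : Module.Basis (Fin n) ℝ (EuclideanSpace ℝ (Fin n)))
    (hcov : K + (↑(Submodule.span ℤ (Set.range b)) : Set (EuclideanSpace ℝ (Fin n)))
      = Set.univ) :
    ({u : EuclideanSpace ℝ (Fin n) | u ∈ Submodule.span ℤ (Set.range b) ∧ u ≠ 0 ∧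
        (K ∩ (K + {u})).Nonempty}.ncard : ENNReal) *
        ENNReal.ofReal |(Matrix.of fun i j => b i j).det|
      ≤ volume ((2 : ℝ) • K + (-K)) := by
  classical
  set S := {u : EuclideanSpace ℝ (Fin n) | u ∈ Submodule.span ℤ (Set.range b) ∧ u ≠ 0 ∧
      (K ∩ (K + {u})).Nonempty} with hS
  have hSfin : S.Finite := hadwiger_star_finite n K hKcpt b
  obtain ⟨D, hDmeas, hDK, hDvol, hDdisj⟩ := hadwiger_exists_selection n K hKcpt.isClosed b hcov
  have hKK : (2 : ℝ) • K = K + K := by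
    rw [show (2:ℝ) = 1 + 1 by norm_num, hKconv.add_smul zero_le_one zero_le_one, one_smul]
  have hsub : ∀ u ∈ S, u +ᵥ D ⊆ (2 : ℝ) • K + (-K) := by
    rintro u ⟨hu, hne, z, hzK, hz2⟩ x hx
    obtain ⟨y, hy, hyz⟩ : ∃ y ∈ K, y + u = z := by
      obtain ⟨y, hy, w, hw, hyw⟩ := Set.mem_add.1 hz2
      exact ⟨y, hy, by rw [Set.mem_singleton_iff] at hw; rw [← hw]; exact hyw⟩
    obtain ⟨d, hd, rfl⟩ := Set.mem_vadd_set.1 hx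
    refine Set.mem_add.2 ⟨d + z, ?_, -y, Set.neg_mem_neg.2 hy, ?_⟩
    · rw [hKK]; exact Set.add_mem_add (hDK hd) hzK
    · rw [← hyz]; simp [vadd_eq_add]; abel
  set T := hSfin.toFinset with hT
  have hdisjT : (T : Set (EuclideanSpace ℝ (Fin n))).PairwiseDisjoint (fun u => u +ᵥ D) := by
    intro u hu v hv huv
    rw [hT, Set.Finite.coe_toFinset] at hu hv
    exact hDdisj u v hu.1 hv.1 huv
  have hmeasU : volume (⋃ u ∈ T, u +ᵥ D) = ∑ u ∈ T, volume (u +ᵥ D) :=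
    measure_biUnion_finset hdisjT fun u _ => hDmeas.const_vadd u
  have hcard : S.ncard = T.card := Set.ncard_eq_toFinset_card S hSfin
  calc (S.ncard : ENNReal) * ENNReal.ofReal |(Matrix.of fun i j => b i j).det|
      = ∑ u ∈ T, volume (u +ᵥ D) := by
        simp only [measure_vadd, hDvol, hadwiger_vol_fd, Finset.sum_const, hcard, nsmul_eq_mul]
    _ = volume (⋃ u ∈ T, u +ᵥ D) := hmeasU.symm
    _ ≤ volume ((2 : ℝ) • K + (-K)) := by
        refine measure_mono (Set.iUnion₂_subset fun u hu => ?_)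
        exact hsub u (by rwa [hT, Set.Finite.mem_toFinset] at hu)
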